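/- Let d = 1 and α ∈ (0,2). Let (X_t)_{t≥0} be a jointly measurable stationary ℝ-valued process on a probability space whose one-dimensional marginal has a bounded density μ with respect to Lebesgue measure, with μ in the anisotropic Hölder class H_1(β, L) for some β, L > 0. Assume there is a constant C₀ such that for every T > 0 and every bounded measurable f : ℝ → ℝ whose support S has Lebesgue measure |S| < 1: Var(∫_0^T f(X_t) dt) ≤ C₀ T ‖f‖_∞² |S|² (1 + (log(1/|S|))^{2−(1+α)/2} + log(1/|S|)). Let K be a kernel function satisfying ∫_ℝ K = 1, ‖K‖_∞ < ∞, supp(K) ⊆ [−1,1], ∫_ℝ K(x) x^l dx = 0 for l ∈ {1,…,M}, with M ≥ β, and define μ̂_{h,T}(x) = (1/(Th)) ∫_0^T K((x − X_u)/h) du. Then there is a constant C, independent of x, T and h, such that: (i) for every x ∈ ℝ, T > 0 and h ∈ (0, 1/2], E[|μ̂_{h,T}(x) − μ(x)|²] ≤ C ( h^{2β} + T^{−1} (1 + (log(1/h))^{2−(1+α)/2} + log(1/h)) ); (ii) for any a ∈ (0,1] with 2aβ > 1, taking h = T^{−a}, one has E[|μ̂_{h,T}(x) − μ(x)|²] ≤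 C (log T)^{max(2−(1+α)/2, 1)} / T for all sufficiently large T and all x ∈ ℝ. -/

import Mathlib

open Real MeasureTheory

/-- Largest integer strictly smaller than `b` (for `b > 0`). -/
noncomputable def flr (b : ℝ) : ℕ := ⌈b⌉₊ - 1

/-- The one-dimensional Hölder class `H_1(β, L)`. -/
def memHolder1 (β L : ℝ) (g : ℝ → ℝ) : Prop :=
  (∀ k ≤ flr β, ∀ x, |deriv^[k] g x| ≤ L) ∧
  (∀ k < flr β, Differentiable ℝ (deriv^[k] g)) ∧
  (∀ t x : ℝ, |deriv^[flr β] g (x + t) - deriv^[flr β] g x|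
    ≤ L * |t| ^ (β - (flr β : ℝ)))

set_option maxHeartbeats 2000000

open scoped ENNReal NNReal

namespace Stmt16Aux

lemma rpow_add_le (a b γ : ℝ) (ha : 0 ≤ a) (hb : 0 ≤ b) (hγ0 : 0 ≤ γ) (hγ2 : γ ≤ 2) :
    (a + b) ^ γ ≤ 4 * (a ^ γ + b ^ γ) := by
  have hm : (0:ℝ) ≤ max a b := le_max_iff.mpr (Or.inl ha)
  have hmax : a + b ≤ 2 * max a b := by
    rcases le_total a b with h | h
    · rw [max_eq_right h]; linarith
    · rw [max_eq_left h]; linarith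
  have h1 : (a + b) ^ γ ≤ (2 * max a b) ^ γ :=
    Real.rpow_le_rpow (by linarith) hmax hγ0
  have h2 : (2 * max a b) ^ γ = 2 ^ γ * (max a b) ^ γ :=
    Real.mul_rpow (by norm_num) hm
  have h3 : (2:ℝ) ^ γ ≤ 4 := by
    calc (2:ℝ) ^ γ ≤ 2 ^ (2:ℝ) := Real.rpow_le_rpow_of_exponent_le (by norm_num) hγ2
    _ = 4 := by rw [show (2:ℝ) ^ (2:ℝ) = 2 ^ (2:ℕ) from Real.rpow_natCast 2 2]; norm_num
  have h4 : (max a b) ^ γ ≤ a ^ γ + b ^ γ := by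
    rcases le_total a b with h | h
    · rw [max_eq_right h]; have := Real.rpow_nonneg ha γ; linarith
    · rw [max_eq_left h]; have := Real.rpow_nonneg hb γ; linarith
  have hmγ : (0:ℝ) ≤ (max a b) ^ γ := Real.rpow_nonneg hm _
  calc (a+b)^γ ≤ 2^γ * (max a b)^γ := by rw [← h2]; exact h1
  _ ≤ 4 * (max a b)^γ := mul_le_mul_of_nonneg_right h3 hmγ
  _ ≤ 4 * (a^γ + b^γ) := mul_le_mul_of_nonneg_left h4 (by norm_num)

lemma rpow_le_one_add_sq (t γ : ℝ) (ht : 0 ≤ t) (hγ0 : 0 ≤ γ) (hγ2 : γ ≤ 2) :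
    t ^ γ ≤ 1 + t ^ 2 := by
  rcases le_total t 1 with h | h
  · have h1 : t ^ γ ≤ 1 := Real.rpow_le_one ht h hγ0
    nlinarith [sq_nonneg t]
  · have h1 : t ^ γ ≤ t ^ (2:ℝ) := Real.rpow_le_rpow_of_exponent_le h hγ2
    rw [show t ^ (2:ℝ) = t ^ (2:ℕ) from Real.rpow_natCast t 2] at h1
    linarith

lemma compare_lemma {γ s h : ℝ} (hγ0 : 0 < γ) (hγ2 : γ ≤ 2) (hs : 0 ≤ s) (hsh : s ≤ h)
    (hh : 0 < h) (hh2 : h ≤ 1/2) :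
    s^2*(1 + Real.log (1/s)^γ + Real.log (1/s))
      ≤ 10*(h^2*(1 + Real.log (1/h)^γ + Real.log (1/h))) := by
  have hlh : 0 ≤ Real.log (1/h) := by
    apply Real.log_nonneg; rw [le_div_iff₀ hh]; linarith
  have hγh : (0:ℝ) ≤ Real.log (1/h) ^ γ := Real.rpow_nonneg hlh γ
  have hbrh : (0:ℝ) ≤ 1 + Real.log (1/h)^γ + Real.log (1/h) := by linarith
  rcases eq_or_lt_of_le hs with rfl | hs0
  · simp only [ne_eq, div_zero, Real.log_zero, Real.zero_rpow (ne_of_gt hγ0)]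
    have e : (0:ℝ)^2*(1+0+0) = 0 := by ring
    rw [e]
    have := mul_nonneg (sq_nonneg h) hbrh
    linarith
  set u := s / h with hu
  have hu0 : 0 < u := div_pos hs0 hh
  have hune : u ≠ 0 := ne_of_gt hu0
  have hu1 : u ≤ 1 := (div_le_one hh).mpr hsh
  have hse : s = h * u := by rw [hu]; field_simp
  have hls : Real.log (1/s) = Real.log (1/h) + Real.log (1/u) := by
    rw [hse, one_div, mul_inv, Real.log_mul (by positivity) (by positivity), one_div, one_div]
  have hlu : 0 ≤ Real.log (1/u) := Real.log_nonneg (by rw [le_div_iff₀ hu0]; linarith)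
  set ℓh := Real.log (1/h)
  set ℓu := Real.log (1/u)
  have hkey : u * ℓu ≤ 1 := by
    have h1 := Real.log_le_sub_one_of_pos (show (0:ℝ) < 1/u by positivity)
    have h2 : u * (1/u - 1) = 1 - u := by field_simp
    calc u * ℓu ≤ u * (1/u - 1) := mul_le_mul_of_nonneg_left h1 hu0.le
    _ = 1 - u := h2
    _ ≤ 1 := by linarith
  have hu2 : u^2 ≤ 1 := by nlinarith
  have hs2 : s^2 ≤ h^2 := by nlinarith
  have huknn : 0 ≤ u * ℓu := mul_nonneg hu0.le hlu
  have htb : s^2 * Real.log (1/s) ≤ h^2 * (1 + ℓh) := by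
    rw [hls, hse]
    have e : (h*u)^2 * (ℓh + ℓu) = h^2 * (u^2 * ℓh) + h^2 * (u * (u * ℓu)) := by ring
    rw [e]
    have b1 : u^2 * ℓh ≤ ℓh := by nlinarith
    have b2 : u * (u * ℓu) ≤ 1 := by nlinarith
    have c1 := mul_le_mul_of_nonneg_left b1 (sq_nonneg h)
    have c2 := mul_le_mul_of_nonneg_left b2 (sq_nonneg h)
    nlinarith [sq_nonneg h]
  have htc : s^2 * Real.log (1/s)^γ ≤ 4*(h^2*ℓh^γ) + 8*h^2 := by
    rw [hls, hse]
    have h1 : (ℓh + ℓu) ^ γ ≤ 4 * (ℓh^γ + ℓu^γ) := rpow_add_le _ _ _ hlh hlu hγ0.le hγ2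
    have h4 : (0:ℝ) ≤ ℓu ^ γ := Real.rpow_nonneg hlu γ
    have h2 : u^2 * ℓu^γ ≤ 2 := by
      have A : ℓu^γ ≤ 1 + ℓu^2 := rpow_le_one_add_sq _ _ hlu hγ0.le hγ2
      have B : u^2 * ℓu^γ ≤ u^2 * (1 + ℓu^2) := mul_le_mul_of_nonneg_left A (sq_nonneg u)
      have C : u^2 * (1 + ℓu^2) = u^2 + (u*ℓu)^2 := by ring
      have D : (u*ℓu)^2 ≤ 1 := by nlinarith
      linarith [B, C.le, C.ge, hu2, D]
    calc (h*u)^2 * (ℓh + ℓu)^γ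
        ≤ (h*u)^2 * (4 * (ℓh^γ + ℓu^γ)) := mul_le_mul_of_nonneg_left h1 (by positivity)
    _ = 4*(h^2*(u^2 * ℓh^γ)) + 4*(h^2*(u^2 * ℓu^γ)) := by ring
    _ ≤ 4*(h^2*ℓh^γ) + 8*h^2 := by
        have b1 : u^2 * ℓh^γ ≤ ℓh^γ := by nlinarith
        have c1 := mul_le_mul_of_nonneg_left b1 (sq_nonneg h)
        have c2 := mul_le_mul_of_nonneg_left h2 (sq_nonneg h)
        linarith
  have eL : s^2*(1 + Real.log (1/s)^γ + Real.log (1/s))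
      = s^2 + s^2*Real.log (1/s)^γ + s^2*Real.log (1/s) := by ring
  have eR : 10*(h^2*(1 + ℓh^γ + ℓh)) = 10*h^2 + 10*(h^2*ℓh^γ) + 10*(h^2*ℓh) := by ring
  have n1 : 0 ≤ h^2*ℓh^γ := mul_nonneg (sq_nonneg h) hγh
  have n2 : 0 ≤ h^2*ℓh := mul_nonneg (sq_nonneg h) hlh
  rw [eL, eR]
  have h2e : h^2*(1+ℓh) = h^2 + h^2*ℓh := by ring
  linarith [htb, htc, hs2]

/-- If `F 0 = 0` and `|F'| ≤ c |t|^(p-1)` then `|F t| ≤ (c/p) |t|^p`, for `p > 1`. -/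
lemma grow_bound (F E : ℝ → ℝ) (c p : ℝ) (hp : 1 < p)
    (hF : ∀ t, HasDerivAt F (E t) t) (hF0 : F 0 = 0)
    (hE : ∀ t, |E t| ≤ c * |t| ^ (p - 1)) :
    ∀ t, |F t| ≤ c / p * |t| ^ p := by
  have hp0 : 0 < p := by linarith
  have key : ∀ (G EG : ℝ → ℝ), (∀ t, HasDerivAt G (EG t) t) → G 0 = 0 →
      (∀ t, |EG t| ≤ c * |t| ^ (p - 1)) → ∀ t, 0 ≤ t → G t ≤ c / p * t ^ p := by
    intro G EG hG hG0 hEG t ht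
    rcases eq_or_lt_of_le ht with rfl | ht0
    · rw [hG0, Real.zero_rpow (ne_of_gt hp0)]; simp
    set φ : ℝ → ℝ := fun s => c / p * s ^ p - G s with hφ
    have hcont : ContinuousOn φ (Set.Icc 0 t) := by
      apply ContinuousOn.sub
      · exact (continuous_const.mul
          (continuous_iff_continuousAt.2 fun x =>
            (Real.continuousAt_rpow_const x p (Or.inr hp0.le)))).continuousOn
      · exact (fun s _ => ((hG s).continuousAt.continuousWithinAt))
    have hderiv : ∀ s ∈ Set.Ioo (0:ℝ) t, HasDerivAt φ (c * s ^ (p-1) - EG s) s := by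
      intro s hs
      have h1 : HasDerivAt (fun s : ℝ => s ^ p) (p * s ^ (p-1)) s :=
        Real.hasDerivAt_rpow_const (Or.inl (ne_of_gt hs.1))
      have h2 : HasDerivAt (fun s : ℝ => c / p * s ^ p) (c / p * (p * s ^ (p-1))) s :=
        h1.const_mul _
      have h3 : c / p * (p * s ^ (p-1)) = c * s ^ (p-1) := by
        field_simp
      rw [h3] at h2
      exact h2.sub (hG s)
    have hmono : MonotoneOn φ (Set.Icc 0 t) := by
      apply monotoneOn_of_deriv_nonneg (convex_Icc 0 t) hcont
      · intro s hs
        rw [interior_Icc] at hs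
        exact ((hderiv s hs).differentiableAt).differentiableWithinAt
      · intro s hs
        rw [interior_Icc] at hs
        rw [(hderiv s hs).deriv]
        have := abs_le.1 (hEG s)
        rw [abs_of_pos hs.1] at this
        linarith [this.2]
    have h01 : (0:ℝ) ∈ Set.Icc 0 t := Set.mem_Icc.2 ⟨le_refl _, ht⟩
    have h02 : t ∈ Set.Icc 0 t := Set.mem_Icc.2 ⟨ht, le_refl _⟩
    have := hmono h01 h02 ht
    simp only [hφ, hG0, Real.zero_rpow (ne_of_gt hp0), mul_zero, sub_zero] at this
    linarith [this]
  intro t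
  rcases le_total 0 t with ht | ht
  · have h1 := key F E hF hF0 hE t ht
    have h2 := key (fun s => -F s) (fun s => -E s) (fun s => (hF s).neg)
      (by simp [hF0]) (fun s => by rw [abs_neg]; exact hE s) t ht
    rw [abs_of_nonneg ht]
    rw [abs_le]; constructor <;> [linarith; linarith]
  · have hne : ∀ (G : ℝ → ℝ) (EG : ℝ → ℝ), (∀ s, HasDerivAt G (EG s) s) →
        ∀ s, HasDerivAt (fun s => G (-s)) (-(EG (-s))) s := by
      intro G EG hG s
      have := (hG (-s)).comp s (hasDerivAt_neg s)
      simpa [mul_comm, Function.comp_def] using this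
    have h1 := key (fun s => F (-s)) (fun s => -(E (-s))) (hne F E hF)
      (by simp [hF0]) (fun s => by rw [abs_neg, ← abs_neg s]; exact hE (-s)) (-t) (by linarith)
    have h2 := key (fun s => -F (-s)) (fun s => E (-s))
      (fun s => by simpa [Pi.neg_def] using ((hne F E hF) s).neg)
      (by simp [hF0]) (fun s => by rw [← abs_neg s]; exact hE (-s)) (-t) (by linarith)
    rw [abs_of_nonpos ht]
    rw [abs_le]; constructor
    · have : -(c / p * (-t) ^ p) ≤ F (-(-t)) := by simpa using neg_le_neg h2
      simpa using this
    · simpa using h1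

lemma taylorHolder : ∀ (n : ℕ) (β L : ℝ) (g : ℝ → ℝ), 0 ≤ L → (n:ℝ) < β → β ≤ n+1 →
    (∀ k < n, Differentiable ℝ (deriv^[k] g)) →
    (∀ t x, |deriv^[n] g (x+t) - deriv^[n] g x| ≤ L * |t|^(β - n)) →
    ∀ x t, |g (x+t) - ∑ k ∈ Finset.range (n+1), deriv^[k] g x * t^k / k.factorial|
      ≤ L / n.factorial * |t| ^ β := by
  intro n
  induction n with
  | zero =>
    intro β L g hL hn hβ1 hdiff hhold x t
    simpa using hhold t x
  | succ n IH =>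
    intro β L g hL hn hβ1 hdiff hhold x t
    have hcast : ((n+1 : ℕ) : ℝ) = (n:ℝ) + 1 := by push_cast; ring
    have hβ1' : 1 < β := by
      have h1 : ((n:ℝ)+1) < β := by rw [← hcast]; exact hn
      have h2 : (0:ℝ) ≤ n := Nat.cast_nonneg n
      linarith
    have hIH : ∀ x s, |deriv g (x+s) - ∑ k ∈ Finset.range (n+1),
        deriv^[k+1] g x * s^k / k.factorial| ≤ L / n.factorial * |s| ^ (β-1) := by
      have h1 : ((n:ℝ)) < β - 1 := by
        have : ((n:ℝ)+1) < β := by rw [← hcast]; exact hn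
        linarith
      have h2 : β - 1 ≤ (n:ℝ) + 1 := by
        have : β ≤ ((n+1:ℕ):ℝ) + 1 := hβ1
        rw [hcast] at this; linarith
      have h3 : ∀ k < n, Differentiable ℝ (deriv^[k] (deriv g)) := by
        intro k hk
        rw [← Function.iterate_succ_apply]
        exact hdiff (k+1) (by omega)
      have h4 : ∀ t x, |deriv^[n] (deriv g) (x+t) - deriv^[n] (deriv g) x|
          ≤ L * |t|^((β-1) - n) := by
        intro t x
        rw [← Function.iterate_succ_apply]
        have := hhold t x
        have he : β - ((n+1:ℕ):ℝ) = (β - 1) - n := by rw [hcast]; ring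
        rw [he] at this
        exact this
      exact IH (β-1) L (deriv g) hL h1 h2 h3 h4
    set F : ℝ → ℝ := fun t => g (x+t) - ∑ k ∈ Finset.range (n+2),
      deriv^[k] g x * t^k / k.factorial with hF
    set E : ℝ → ℝ := fun t => deriv g (x+t) - ∑ k ∈ Finset.range (n+1),
      deriv^[k+1] g x * t^k / k.factorial with hE
    have hgdiff : Differentiable ℝ g := by
      have := hdiff 0 (by omega); simpa using this
    have hFderiv : ∀ s, HasDerivAt F (E s) s := by
      intro s
      have h1 : HasDerivAt (fun t => g (x+t)) (deriv g (x+s)) s := by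
        have := (hgdiff (x+s)).hasDerivAt
        have h2 := this.comp s ((hasDerivAt_id s).const_add x)
        simpa [Function.comp_def] using h2
      have h2 : HasDerivAt (fun t : ℝ => ∑ k ∈ Finset.range (n+2),
          deriv^[k] g x * t^k / k.factorial)
          (∑ k ∈ Finset.range (n+1), deriv^[k+1] g x * s^k / k.factorial) s := by
        have h3 : HasDerivAt (fun t : ℝ => ∑ k ∈ Finset.range (n+2),
            deriv^[k] g x * t^k / k.factorial)
            (∑ k ∈ Finset.range (n+2), deriv^[k] g x * ((k:ℝ) * s^(k-1)) / k.factorial) s := by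
          apply HasDerivAt.fun_sum
          intro k _
          have := (hasDerivAt_pow k s).const_mul (deriv^[k] g x)
          have h4 : HasDerivAt (fun t : ℝ => deriv^[k] g x * t^k / k.factorial)
              (deriv^[k] g x * ((k:ℝ) * s^(k-1)) / k.factorial) s := by
            simpa [div_eq_mul_inv, mul_assoc, mul_comm, mul_left_comm] using
              this.div_const (k.factorial : ℝ)
          exact h4
        convert h3 using 1
        rw [Finset.sum_range_succ' (fun k => deriv^[k] g x * ((k:ℝ) * s^(k-1)) / k.factorial) (n+1)]
        simp only [Nat.cast_zero, zero_mul, mul_zero, zero_div, add_zero, Nat.factorial_zero]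
        apply Finset.sum_congr rfl
        intro k _
        have hfac : ((k+1).factorial : ℝ) = (k+1) * k.factorial := by
          rw [Nat.factorial_succ]; push_cast; ring
        rw [Nat.add_sub_cancel, hfac]
        field_simp
        push_cast
        ring
      exact h1.sub h2
    have hF0 : F 0 = 0 := by
      simp only [hF, add_zero]
      rw [Finset.sum_eq_single 0]
      · simp
      · intro k _ hk
        simp [zero_pow hk]
      · intro h; simp at h
    have hEbound : ∀ s, |E s| ≤ (L / n.factorial) * |s| ^ (β - 1) := hIH x
    have := grow_bound F E (L / n.factorial) β hβ1' hFderiv hF0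
      (fun s => by simpa using hEbound s) t
    have hnb : ((n:ℝ)+1) ≤ β := by
      have : ((n:ℝ)+1) < β := by rw [← hcast]; exact hn
      linarith
    have hconst : L / n.factorial / β ≤ L / (n+1).factorial := by
      rw [div_div]
      have hfac : ((n+1).factorial : ℝ) = n.factorial * ((n:ℝ)+1) := by
        rw [Nat.factorial_succ]; push_cast; ring
      rw [hfac]
      apply div_le_div_of_nonneg_left hL
      · positivity
      · apply mul_le_mul_of_nonneg_left hnb
        positivity
    calc |g (x+t) - ∑ k ∈ Finset.range (n+1+1), deriv^[k] g x * t^k / k.factorial|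
        = |F t| := rfl
    _ ≤ L / n.factorial / β * |t| ^ β := this
    _ ≤ L / (n+1).factorial * |t| ^ β := by
        apply mul_le_mul_of_nonneg_right hconst
        positivity

lemma integrable_of_bdd_supp {f : ℝ → ℝ} (hf : Measurable f) {c : ℝ}
    (hbd : ∀ z, |f z| ≤ c) (hsupp : ∀ z, z ∉ Set.Icc (-1:ℝ) 1 → f z = 0) :
    Integrable f := by
  apply Integrable.mono' (g := Set.indicator (Set.Icc (-1:ℝ) 1) fun _ => c)
  · rw [integrable_indicator_iff measurableSet_Icc]
    exact (integrableOn_const_iff).mpr (Or.inr (by rw [Real.volume_Icc]; exact ENNReal.ofReal_lt_top))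
  · exact hf.aestronglyMeasurable
  · filter_upwards with z
    by_cases hz : z ∈ Set.Icc (-1:ℝ) 1
    · rw [Set.indicator_of_mem hz]; simpa [Real.norm_eq_abs] using hbd z
    · rw [Set.indicator_of_notMem hz, hsupp z hz]; simp

lemma bias_bound (K μ : ℝ → ℝ) (hK_meas : Measurable K) (hK_int : ∫ x, K x = 1)
    (MK : ℝ) (hK_bdd : ∀ x, |K x| ≤ MK) (hK_supp : Function.support K ⊆ Set.Icc (-1) 1)
    (hμ_meas : Measurable μ) (Cμ : ℝ) (hμ_abs : ∀ y, |μ y| ≤ Cμ)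
    (n : ℕ) (β L : ℝ) (hL : 0 ≤ L) (hβpos : 0 < β)
    (htaylor : ∀ x t, |μ (x+t) - ∑ k ∈ Finset.range (n+1),
      deriv^[k] μ x * t^k / k.factorial| ≤ L / n.factorial * |t| ^ β)
    (hmom : ∀ l : ℕ, 1 ≤ l → l ≤ n → ∫ z, K z * z ^ l = 0)
    (x h : ℝ) (hh : 0 < h) :
    |h⁻¹ * (∫ y, K ((x - y)/h) * μ y) - μ x|
      ≤ 2 * (MK * (L / n.factorial) * h ^ β) := by
  have hKzero : ∀ z, z ∉ Set.Icc (-1:ℝ) 1 → K z = 0 := by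
    intro z hz
    by_contra hne
    exact hz (hK_supp hne)
  have hMK0 : 0 ≤ MK := le_trans (abs_nonneg _) (hK_bdd 0)
  set G : ℝ → ℝ := fun y => K ((x - y)/h) * μ y with hG
  have hGm : ∀ z, G (x - h * z) = K z * μ (x - h * z) := by
    intro z
    simp only [hG]
    congr 2
    field_simp
    ring
  have step1 : ∫ z : ℝ, K z * μ (x - h * z) = h⁻¹ * ∫ y, G y := by
    rw [show (fun z : ℝ => K z * μ (x - h*z)) = fun z => G (x - h * z) by
      ext z; rw [hGm z]]
    have e : (fun z : ℝ => G (x - h * z)) = fun z => (fun w => G (x + w)) ((-h) * z) := by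
      ext z; ring_nf
    rw [e, MeasureTheory.Measure.integral_comp_mul_left (fun w => G (x + w)) (-h),
      MeasureTheory.integral_add_left_eq_self (μ := volume) G x]
    rw [smul_eq_mul]
    congr 1
    rw [abs_inv, abs_neg, abs_of_pos hh]
  set c : ℕ → ℝ := fun k => deriv^[k] μ x * (-h)^k / k.factorial with hc
  have hμcomp : Measurable fun z : ℝ => μ (x - h * z) :=
    hμ_meas.comp (by fun_prop)
  have hint1 : Integrable (fun z : ℝ => K z * μ (x - h * z)) := by
    apply integrable_of_bdd_supp (by fun_prop) (c := MK * Cμ)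
    · intro z
      rw [abs_mul]
      have h1 := hK_bdd z
      have h2 := hμ_abs (x - h * z)
      have := abs_nonneg (K z)
      have := abs_nonneg (μ (x - h*z))
      nlinarith
    · intro z hz; rw [hKzero z hz, zero_mul]
  have hint2 : ∀ k : ℕ, Integrable (fun z : ℝ => K z * z ^ k) := by
    intro k
    apply integrable_of_bdd_supp (by fun_prop) (c := MK)
    · intro z
      by_cases hz : z ∈ Set.Icc (-1:ℝ) 1
      · rw [abs_mul, abs_pow]
        have hz1 : |z| ≤ 1 := abs_le.mpr ⟨hz.1, hz.2⟩
        have : |z|^k ≤ 1 := pow_le_one₀ (abs_nonneg z) hz1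
        nlinarith [abs_nonneg (K z), hK_bdd z]
      · rw [hKzero z hz, zero_mul, abs_zero]; exact hMK0
    · intro z hz; rw [hKzero z hz, zero_mul]
  have step2 : ∫ z : ℝ, ∑ k ∈ Finset.range (n+1), c k * (K z * z^k) = μ x := by
    rw [integral_finset_sum _ (fun k _ => (hint2 k).const_mul (c k))]
    have : ∀ k ∈ Finset.range (n+1), ∫ z : ℝ, c k * (K z * z^k)
        = if k = 0 then μ x else 0 := by
      intro k hk
      rw [integral_const_mul]
      rcases Nat.eq_zero_or_pos k with rfl | hkpos
      · simp only [if_pos rfl, pow_zero, mul_one, hK_int, hc]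
        simp
      · rw [if_neg (by omega), hmom k hkpos (by
          simp only [Finset.mem_range] at hk; omega), mul_zero]
    rw [Finset.sum_congr rfl this]
    simp
  have key : h⁻¹ * (∫ y, G y) - μ x
      = ∫ z : ℝ, K z * (μ (x - h * z) - ∑ k ∈ Finset.range (n+1), c k * z ^ k) := by
    rw [← step1, ← step2, ← integral_sub hint1]
    · congr 1
      ext z
      rw [mul_sub, Finset.mul_sum]
      congr 1
      apply Finset.sum_congr rfl
      intro k _
      ring
    · exact integrable_finset_sum _ (fun k _ => (hint2 k).const_mul (c k))
  rw [key]
  have hbound : ∀ z : ℝ, ‖K z * (μ (x - h * z) - ∑ k ∈ Finset.range (n+1), c k * z ^ k)‖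
      ≤ Set.indicator (Set.Icc (-1:ℝ) 1) (fun _ => MK * (L / n.factorial) * h ^ β) z := by
    intro z
    by_cases hz : z ∈ Set.Icc (-1:ℝ) 1
    · rw [Set.indicator_of_mem hz]
      have ht := htaylor x (-(h * z))
      have he : x + (-(h*z)) = x - h * z := by ring
      rw [he] at ht
      have he2 : ∀ k : ℕ, deriv^[k] μ x * (-(h*z))^k / k.factorial = c k * z ^ k := by
        intro k
        simp only [hc]
        rw [neg_mul_eq_neg_mul, mul_pow]
        ring
      rw [Finset.sum_congr rfl (fun k _ => he2 k)] at ht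
      have habs : |(-(h*z))| = h * |z| := by
        rw [abs_neg, abs_mul, abs_of_pos hh]
      rw [habs] at ht
      have hrp : (h * |z|) ^ β = h ^ β * |z| ^ β := Real.mul_rpow hh.le (abs_nonneg z)
      rw [hrp] at ht
      have hz1 : |z| ^ β ≤ 1 := Real.rpow_le_one (abs_nonneg z)
        (abs_le.mpr ⟨hz.1, hz.2⟩) hβpos.le
      have hLn : (0:ℝ) ≤ L / n.factorial := by positivity
      have hhb : (0:ℝ) ≤ h ^ β := Real.rpow_nonneg hh.le β
      rw [Real.norm_eq_abs, abs_mul]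
      calc |K z| * |μ (x - h*z) - ∑ k ∈ Finset.range (n+1), c k * z^k|
          ≤ MK * (L / n.factorial * (h^β * |z|^β)) := by
            apply mul_le_mul (hK_bdd z) ht (abs_nonneg _) hMK0
      _ ≤ MK * (L / n.factorial) * h ^ β := by
            have h9 : L / n.factorial * (h^β * |z|^β) ≤ L / n.factorial * h^β := by
              have h10 := mul_le_mul_of_nonneg_left hz1 (mul_nonneg hLn hhb)
              nlinarith [h10]
            calc MK * (L / n.factorial * (h^β * |z|^β))
                ≤ MK * (L / n.factorial * h^β) := mul_le_mul_of_nonneg_left h9 hMK0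
            _ = MK * (L / n.factorial) * h ^ β := by ring
    · rw [Set.indicator_of_notMem hz, hKzero z hz, zero_mul]
      simp
  have hgint : Integrable (Set.indicator (Set.Icc (-1:ℝ) 1)
      (fun _ : ℝ => MK * (L / n.factorial) * h ^ β)) := by
    rw [integrable_indicator_iff measurableSet_Icc]
    exact (integrableOn_const_iff).mpr (Or.inr (by rw [Real.volume_Icc]; exact ENNReal.ofReal_lt_top))
  calc |∫ z : ℝ, K z * (μ (x - h * z) - ∑ k ∈ Finset.range (n+1), c k * z ^ k)|
      ≤ ∫ z : ℝ, Set.indicator (Set.Icc (-1:ℝ) 1)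
          (fun _ => MK * (L / n.factorial) * h ^ β) z := by
        rw [← Real.norm_eq_abs]
        exact norm_integral_le_of_norm_le hgint (Filter.Eventually.of_forall hbound)
  _ = 2 * (MK * (L / n.factorial) * h ^ β) := by
      rw [integral_indicator_const _ measurableSet_Icc, measureReal_def, Real.volume_Icc, smul_eq_mul]
      norm_num

variable {Ω : Type*} [MeasurableSpace Ω] (P : Measure Ω) [IsProbabilityMeasure P]

lemma int_bddP {g : Ω → ℝ} (hg : AEStronglyMeasurable g P) {c : ℝ} (hb : ∀ ω, |g ω| ≤ c) :
    Integrable g P :=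
  ⟨hg, HasFiniteIntegral.of_bounded (C := c)
    (Filter.Eventually.of_forall fun ω => by simpa [Real.norm_eq_abs] using hb ω)⟩

lemma marginal_eq (X : ℝ → Ω → ℝ) (hX : Measurable (Function.uncurry X))
    (hstat : ∀ (n : ℕ) (t : Fin n → ℝ) (s : ℝ), 0 ≤ s → (∀ i, 0 ≤ t i) →
      P.map (fun ω i => X (t i + s) ω) = P.map (fun ω i => X (t i) ω))
    (u : ℝ) (hu : 0 ≤ u) : P.map (X u) = P.map (X 0) := by
  have hXm : ∀ v : ℝ, Measurable (X v) := fun v =>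
    hX.comp (measurable_const.prodMk measurable_id)
  have h := hstat 1 (fun _ => 0) u hu (fun _ => le_refl 0)
  have hΦ : Measurable (fun g : Fin 1 → ℝ => g 0) := measurable_pi_apply 0
  have hF1 : Measurable (fun ω (i : Fin 1) => X ((0:ℝ) + u) ω) :=
    measurable_pi_lambda _ (fun _ => hXm _)
  have hF2 : Measurable (fun ω (i : Fin 1) => X (0:ℝ) ω) :=
    measurable_pi_lambda _ (fun _ => hXm _)
  have e1 : P.map (X u) = (P.map (fun ω (i : Fin 1) => X ((fun _ : Fin 1 => (0:ℝ)) i + u) ω)).map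
      (fun g : Fin 1 → ℝ => g 0) := by
    rw [Measure.map_map hΦ hF1]
    congr 1
    ext ω
    simp
  have e2 : (P.map (fun ω (i : Fin 1) => X ((fun _ : Fin 1 => (0:ℝ)) i) ω)).map
      (fun g : Fin 1 → ℝ => g 0) = P.map (X 0) := by
    rw [Measure.map_map hΦ hF2]
    rfl
  rw [e1, h, e2]

lemma exp_eq (X : ℝ → Ω → ℝ) (hX : Measurable (Function.uncurry X))
    (μ : ℝ → ℝ) (hμ_meas : Measurable μ) (hμ_nonneg : ∀ x, 0 ≤ μ x)
    (hμ_density : P.map (X 0) = volume.withDensity (fun x => ENNReal.ofReal (μ x)))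
    (f : ℝ → ℝ) (hf : Measurable f)
    (u : ℝ) (hmap : P.map (X u) = P.map (X 0)) :
    ∫ ω, f (X u ω) ∂P = ∫ y, f y * μ y := by
  have hXm : Measurable (X u) := hX.comp (measurable_const.prodMk measurable_id)
  rw [← integral_map hXm.aemeasurable hf.aestronglyMeasurable, hmap, hμ_density]
  have e : (fun x => ENNReal.ofReal (μ x)) = fun x => ((fun x => (μ x).toNNReal) x : ℝ≥0∞) := rfl
  rw [e, integral_withDensity_eq_integral_smul hμ_meas.real_toNNReal f]
  congr 1
  ext y
  rw [NNReal.smul_def, Real.coe_toNNReal _ (hμ_nonneg y), smul_eq_mul, mul_comm]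

lemma exp_timeint (X : ℝ → Ω → ℝ) (hX : Measurable (Function.uncurry X))
    (μ : ℝ → ℝ) (hμ_meas : Measurable μ) (hμ_nonneg : ∀ x, 0 ≤ μ x)
    (hμ_density : P.map (X 0) = volume.withDensity (fun x => ENNReal.ofReal (μ x)))
    (hmarg : ∀ u : ℝ, 0 ≤ u → P.map (X u) = P.map (X 0))
    (g : ℝ → ℝ) (hg : Measurable g) (Mg : ℝ) (hbd : ∀ y, |g y| ≤ Mg)
    (T : ℝ) (hT : 0 < T) :
    ∫ ω, (∫ u in Set.Icc 0 T, g (X u ω)) ∂P = T * ∫ y, g y * μ y := by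
  haveI : IsFiniteMeasure (volume.restrict (Set.Icc (0:ℝ) T)) :=
    ⟨by rw [Measure.restrict_apply_univ]; exact measure_Icc_lt_top⟩
  have hFm : Measurable (Function.uncurry (fun (ω : Ω) (u : ℝ) => g (X u ω))) :=
    hg.comp (hX.comp measurable_swap)
  have hFint : Integrable (Function.uncurry (fun (ω : Ω) (u : ℝ) => g (X u ω)))
      (P.prod (volume.restrict (Set.Icc (0:ℝ) T))) :=
    ⟨hFm.aestronglyMeasurable, HasFiniteIntegral.of_bounded (C := Mg)
      (Filter.Eventually.of_forall (fun p => by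
        simpa [Real.norm_eq_abs, Function.uncurry] using hbd (X p.2 p.1)))⟩
  have hswap := integral_integral_swap hFint
  rw [hswap]
  have hcongr : ∀ u ∈ Set.Icc (0:ℝ) T, (∫ ω, g (X u ω) ∂P) = ∫ y, g y * μ y :=
    fun u hu => exp_eq P X hX μ hμ_meas hμ_nonneg hμ_density g hg u (hmarg u hu.1)
  rw [setIntegral_congr_fun measurableSet_Icc hcongr, setIntegral_const, measureReal_def, Real.volume_Icc,
    smul_eq_mul, ENNReal.toReal_ofReal (by linarith)]
  ring_nf

lemma timeint_sm (X : ℝ → Ω → ℝ) (hX : Measurable (Function.uncurry X))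
    (g : ℝ → ℝ) (hg : Measurable g) (T : ℝ) :
    StronglyMeasurable (fun ω => ∫ u in Set.Icc 0 T, g (X u ω)) := by
  have h : Measurable (fun p : Ω × ℝ => g (X p.2 p.1)) := hg.comp (hX.comp measurable_swap)
  exact h.stronglyMeasurable.integral_prod_right'

lemma timesect_int (X : ℝ → Ω → ℝ) (hX : Measurable (Function.uncurry X))
    (g : ℝ → ℝ) (hg : Measurable g) (Mg : ℝ) (hbd : ∀ y, |g y| ≤ Mg)
    (T : ℝ) (ω : Ω) :
    IntegrableOn (fun u => g (X u ω)) (Set.Icc 0 T) volume := by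
  haveI : IsFiniteMeasure (volume.restrict (Set.Icc (0:ℝ) T)) :=
    ⟨by rw [Measure.restrict_apply_univ]; exact measure_Icc_lt_top⟩
  have hm : Measurable (fun u => g (X u ω)) :=
    hg.comp (hX.comp (measurable_id.prodMk measurable_const))
  exact ⟨hm.aestronglyMeasurable, HasFiniteIntegral.of_bounded (C := Mg)
    (Filter.Eventually.of_forall fun u => by simpa [Real.norm_eq_abs] using hbd (X u ω))⟩

lemma timeint_bd (X : ℝ → Ω → ℝ) (hX : Measurable (Function.uncurry X))
    (g : ℝ → ℝ) (hg : Measurable g) (Mg : ℝ) (hbd : ∀ y, |g y| ≤ Mg)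
    (T : ℝ) (hT : 0 ≤ T) (ω : Ω) :
    |∫ u in Set.Icc 0 T, g (X u ω)| ≤ Mg * T := by
  have hm : Measurable (fun u => g (X u ω)) :=
    hg.comp (hX.comp (measurable_id.prodMk measurable_const))
  rw [← Real.norm_eq_abs]
  have h := norm_setIntegral_le_of_norm_le_const (μ := volume) (s := Set.Icc (0:ℝ) T) (f := fun u => g (X u ω))
    (C := Mg) measure_Icc_lt_top
    (fun u _ => by simpa [Real.norm_eq_abs] using hbd (X u ω))
  calc ‖∫ u in Set.Icc 0 T, g (X u ω)‖ ≤ Mg * (volume (Set.Icc (0:ℝ) T)).toReal := h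
  _ = Mg * T := by rw [Real.volume_Icc, ENNReal.toReal_ofReal (by linarith), sub_zero]

lemma sq_int {Y : Ω → ℝ} (hsm : StronglyMeasurable Y) {c : ℝ} (A : ℝ) (hbd : ∀ ω, |Y ω| ≤ c) :
    Integrable (fun ω => (Y ω - A)^2) P := by
  refine int_bddP P (c := (c + |A|)^2)
    ((hsm.measurable.sub measurable_const).pow_const 2).aestronglyMeasurable ?_
  intro ω
  have h1 : |Y ω - A| ≤ c + |A| := by
    rw [sub_eq_add_neg]
    calc |Y ω + -A| ≤ |Y ω| + |(-A)| := abs_add_le _ _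
    _ = |Y ω| + |A| := by rw [abs_neg]
    _ ≤ c + |A| := by linarith [hbd ω]
  calc |(Y ω - A)^2| = |Y ω - A|^2 := by rw [abs_of_nonneg (sq_nonneg _), sq_abs]
  _ ≤ (c + |A|)^2 := by
      apply pow_le_pow_left₀ (abs_nonneg _) h1

lemma variance_bound (α : ℝ)
    (X : ℝ → Ω → ℝ) (hX : Measurable (Function.uncurry X)) (C₀ : ℝ) (hC₀ : 0 ≤ C₀)
    (hvar : ∀ T > (0 : ℝ), ∀ f : ℝ → ℝ, ∀ Mf : ℝ,
      Measurable f → (∀ x, |f x| ≤ Mf) → volume (Function.support f) < 1 →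
      (∫ ω, ((∫ t in Set.Icc 0 T, f (X t ω))
          - ∫ ω', (∫ t in Set.Icc 0 T, f (X t ω')) ∂P) ^ 2 ∂P)
        ≤ C₀ * T * Mf ^ 2 * (volume (Function.support f)).toReal ^ 2 *
          (1 + Real.log (1 / (volume (Function.support f)).toReal) ^ (2 - (1 + α) / 2)
             + Real.log (1 / (volume (Function.support f)).toReal)))
    (hγ0 : 0 < 2 - (1+α)/2) (hγ2 : 2 - (1+α)/2 ≤ 2)
    (f : ℝ → ℝ) (hfmeas : Measurable f) (MK : ℝ) (hfbd : ∀ y, |f y| ≤ MK)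
    (x h T : ℝ) (hT : 0 < T) (hh0 : 0 < h) (hh2 : h ≤ 1/2)
    (hsupp : Function.support f ⊆ Set.Icc (x-h) (x+h)) :
    (∫ ω, ((∫ t in Set.Icc 0 T, f (X t ω))
        - ∫ ω', (∫ t in Set.Icc 0 T, f (X t ω')) ∂P) ^ 2 ∂P)
      ≤ 40*(C₀*MK^2) * T * (h^2*(1 + Real.log (1/h) ^ (2 - (1+α)/2) + Real.log (1/h))) := by
  have hMK0 : 0 ≤ MK := (abs_nonneg _).trans (hfbd 0)
  set γ := 2 - (1+α)/2 with hγ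
  set br := 1 + Real.log (1/h) ^ γ + Real.log (1/h) with hbr
  set fA := Set.indicator (Set.Iic x) f with hfA
  set fB := Set.indicator (Set.Ioi x) f with hfB
  have hfAB : ∀ y, f y = fA y + fB y := by
    intro y
    by_cases hy : y ≤ x
    · rw [hfA, hfB, Set.indicator_of_mem (Set.mem_Iic.mpr hy),
        Set.indicator_of_notMem (by simp [Set.mem_Ioi]; exact hy)]
      ring
    · push_neg at hy
      rw [hfA, hfB, Set.indicator_of_notMem (by simp [Set.mem_Iic]; exact hy),
        Set.indicator_of_mem (Set.mem_Ioi.mpr hy)]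
      ring
  have hfAm : Measurable fA := hfmeas.indicator measurableSet_Iic
  have hfBm : Measurable fB := hfmeas.indicator measurableSet_Ioi
  have hfAbd : ∀ y, |fA y| ≤ MK := by
    intro y
    rw [hfA]
    by_cases hy : y ∈ Set.Iic x
    · rw [Set.indicator_of_mem hy]; exact hfbd y
    · rw [Set.indicator_of_notMem hy, abs_zero]; exact hMK0
  have hfBbd : ∀ y, |fB y| ≤ MK := by
    intro y
    rw [hfB]
    by_cases hy : y ∈ Set.Ioi x
    · rw [Set.indicator_of_mem hy]; exact hfbd y
    · rw [Set.indicator_of_notMem hy, abs_zero]; exact hMK0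
  -- supports
  have hsuppA : Function.support fA ⊆ Set.Icc (x-h) x := by
    intro y hy
    have h1 : fA y ≠ 0 := hy
    have h2 : y ∈ Set.Iic x := by
      by_contra hc
      rw [hfA, Set.indicator_of_notMem hc] at h1
      exact h1 rfl
    have h3 : f y ≠ 0 := by
      rw [hfA, Set.indicator_of_mem h2] at h1
      exact h1
    have h4 := hsupp h3
    exact ⟨h4.1, h2⟩
  have hsuppB : Function.support fB ⊆ Set.Icc x (x+h) := by
    intro y hy
    have h1 : fB y ≠ 0 := hy
    have h2 : y ∈ Set.Ioi x := by
      by_contra hc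
      rw [hfB, Set.indicator_of_notMem hc] at h1
      exact h1 rfl
    have h3 : f y ≠ 0 := by
      rw [hfB, Set.indicator_of_mem h2] at h1
      exact h1
    have h4 := hsupp h3
    exact ⟨(Set.mem_Ioi.mp h2).le, h4.2⟩
  have hvolA : volume (Function.support fA) ≤ ENNReal.ofReal h := by
    calc volume (Function.support fA) ≤ volume (Set.Icc (x-h) x) := measure_mono hsuppA
    _ = ENNReal.ofReal (x - (x-h)) := Real.volume_Icc
    _ = ENNReal.ofReal h := by norm_num
  have hvolB : volume (Function.support fB) ≤ ENNReal.ofReal h := by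
    calc volume (Function.support fB) ≤ volume (Set.Icc x (x+h)) := measure_mono hsuppB
    _ = ENNReal.ofReal (x + h - x) := Real.volume_Icc
    _ = ENNReal.ofReal h := by norm_num
  have hofh1 : ENNReal.ofReal h < 1 := by
    rw [show (1:ℝ≥0∞) = ENNReal.ofReal 1 by simp]
    exact (ENNReal.ofReal_lt_ofReal_iff_of_nonneg hh0.le).mpr (by linarith)
  have hltA : volume (Function.support fA) < 1 := lt_of_le_of_lt hvolA hofh1
  have hltB : volume (Function.support fB) < 1 := lt_of_le_of_lt hvolB hofh1
  have hsA_le : (volume (Function.support fA)).toReal ≤ h :=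
    ENNReal.toReal_le_of_le_ofReal hh0.le hvolA
  have hsB_le : (volume (Function.support fB)).toReal ≤ h :=
    ENNReal.toReal_le_of_le_ofReal hh0.le hvolB
  -- Y's
  set YA : Ω → ℝ := fun ω => ∫ t in Set.Icc 0 T, fA (X t ω) with hYA
  set YB : Ω → ℝ := fun ω => ∫ t in Set.Icc 0 T, fB (X t ω) with hYB
  set Yf : Ω → ℝ := fun ω => ∫ t in Set.Icc 0 T, f (X t ω) with hYf
  have hYA_sm : StronglyMeasurable YA := timeint_sm X hX fA hfAm T
  have hYB_sm : StronglyMeasurable YB := timeint_sm X hX fB hfBm T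
  have hYf_sm : StronglyMeasurable Yf := timeint_sm X hX f hfmeas T
  have hYA_bd : ∀ ω, |YA ω| ≤ MK * T := timeint_bd X hX fA hfAm MK hfAbd T hT.le
  have hYB_bd : ∀ ω, |YB ω| ≤ MK * T := timeint_bd X hX fB hfBm MK hfBbd T hT.le
  have hYf_bd : ∀ ω, |Yf ω| ≤ MK * T := timeint_bd X hX f hfmeas MK hfbd T hT.le
  have hYA_int : Integrable YA P := int_bddP P hYA_sm.aestronglyMeasurable hYA_bd
  have hYB_int : Integrable YB P := int_bddP P hYB_sm.aestronglyMeasurable hYB_bd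
  set AA := ∫ ω, YA ω ∂P with hAA
  set AB := ∫ ω, YB ω ∂P with hAB
  set Af := ∫ ω, Yf ω ∂P with hAf
  have hsplit_pt : ∀ ω, Yf ω = YA ω + YB ω := by
    intro ω
    simp only [hYf, hYA, hYB]
    have e : (∫ t in Set.Icc (0:ℝ) T, f (X t ω))
        = ∫ t in Set.Icc (0:ℝ) T, (fA (X t ω) + fB (X t ω)) := by
      congr 1
      ext t
      exact hfAB _
    rw [e]
    exact integral_add (timesect_int X hX fA hfAm MK hfAbd T ω)
      (timesect_int X hX fB hfBm MK hfBbd T ω)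
  have hAsplit : Af = AA + AB := by
    rw [hAf, integral_congr_ae (Filter.Eventually.of_forall hsplit_pt)]
    exact integral_add hYA_int hYB_int
  -- pointwise bound and integrate
  have hptw : ∀ ω, (Yf ω - Af)^2 ≤ 2*(YA ω - AA)^2 + 2*(YB ω - AB)^2 := by
    intro ω
    rw [hsplit_pt ω, hAsplit]
    nlinarith [sq_nonneg ((YA ω - AA) - (YB ω - AB))]
  have hintL : Integrable (fun ω => (Yf ω - Af)^2) P := sq_int P hYf_sm Af hYf_bd
  have hintA2 : Integrable (fun ω => (YA ω - AA)^2) P := sq_int P hYA_sm AA hYA_bd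
  have hintB2 : Integrable (fun ω => (YB ω - AB)^2) P := sq_int P hYB_sm AB hYB_bd
  have hmono : (∫ ω, (Yf ω - Af)^2 ∂P)
      ≤ ∫ ω, (2*(YA ω - AA)^2 + 2*(YB ω - AB)^2) ∂P :=
    integral_mono hintL ((hintA2.const_mul 2).add (hintB2.const_mul 2)) hptw
  have hsplit_int : (∫ ω, (2*(YA ω - AA)^2 + 2*(YB ω - AB)^2) ∂P)
      = 2*(∫ ω, (YA ω - AA)^2 ∂P) + 2*(∫ ω, (YB ω - AB)^2 ∂P) := by
    rw [integral_add (hintA2.const_mul 2) (hintB2.const_mul 2), integral_const_mul,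
      integral_const_mul]
  -- apply hvar to fA and fB
  have hnnl : 0 ≤ C₀ * T * MK^2 := mul_nonneg (mul_nonneg hC₀ hT.le) (sq_nonneg MK)
  have hVA : (∫ ω, (YA ω - AA)^2 ∂P) ≤ (C₀*T*MK^2)*(10*(h^2*br)) := by
    have h1 := hvar T hT fA MK hfAm hfAbd hltA
    have h2 := compare_lemma hγ0 hγ2 ENNReal.toReal_nonneg hsA_le hh0 hh2
    calc (∫ ω, (YA ω - AA)^2 ∂P)
        ≤ C₀ * T * MK ^ 2 * (volume (Function.support fA)).toReal ^ 2 *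
          (1 + Real.log (1 / (volume (Function.support fA)).toReal) ^ γ
             + Real.log (1 / (volume (Function.support fA)).toReal)) := h1
    _ = (C₀*T*MK^2) * ((volume (Function.support fA)).toReal ^ 2 *
          (1 + Real.log (1 / (volume (Function.support fA)).toReal) ^ γ
             + Real.log (1 / (volume (Function.support fA)).toReal))) := by ring
    _ ≤ (C₀*T*MK^2) * (10*(h^2*br)) := mul_le_mul_of_nonneg_left h2 hnnl
  have hVB : (∫ ω, (YB ω - AB)^2 ∂P) ≤ (C₀*T*MK^2)*(10*(h^2*br)) := by
    have h1 := hvar T hT fB MK hfBm hfBbd hltB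
    have h2 := compare_lemma hγ0 hγ2 ENNReal.toReal_nonneg hsB_le hh0 hh2
    calc (∫ ω, (YB ω - AB)^2 ∂P)
        ≤ C₀ * T * MK ^ 2 * (volume (Function.support fB)).toReal ^ 2 *
          (1 + Real.log (1 / (volume (Function.support fB)).toReal) ^ γ
             + Real.log (1 / (volume (Function.support fB)).toReal)) := h1
    _ = (C₀*T*MK^2) * ((volume (Function.support fB)).toReal ^ 2 *
          (1 + Real.log (1 / (volume (Function.support fB)).toReal) ^ γ
             + Real.log (1 / (volume (Function.support fB)).toReal))) := by ring
    _ ≤ (C₀*T*MK^2) * (10*(h^2*br)) := mul_le_mul_of_nonneg_left h2 hnnl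
  calc (∫ ω, (Yf ω - Af)^2 ∂P)
      ≤ 2*(∫ ω, (YA ω - AA)^2 ∂P) + 2*(∫ ω, (YB ω - AB)^2 ∂P) := by
        rw [← hsplit_int]; exact hmono
  _ ≤ 2*((C₀*T*MK^2)*(10*(h^2*br))) + 2*((C₀*T*MK^2)*(10*(h^2*br))) := by
      have := mul_le_mul_of_nonneg_left hVA (show (0:ℝ) ≤ 2 by norm_num)
      have := mul_le_mul_of_nonneg_left hVB (show (0:ℝ) ≤ 2 by norm_num)
      linarith
  _ = 40*(C₀*MK^2) * T * (h^2*br) := by ring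


end Stmt16Aux

open Stmt16Aux

/-- Pointwise convergence rate for the kernel invariant-density
estimator, case `d = 1` with jump-activity index `α ∈ (0,2)`:
(i) `E|μ̂_{h,T}(x)-μ(x)|² ≤ C(h^{2β} + T⁻¹(1 + (log(1/h))^{2-(1+α)/2} + log(1/h)))`;
(ii) with `h = T^{-a}`, `2aβ > 1`, the risk is `≤ C (log T)^{max(2-(1+α)/2, 1)}/T`
for all large `T`. -/
theorem stmt16 {Ω : Type*} [MeasurableSpace Ω] (P : Measure Ω) [IsProbabilityMeasure P]
    (α : ℝ) (hα : α ∈ Set.Ioo (0 : ℝ) 2)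
    (β L : ℝ) (hβ : 0 < β) (hL : 0 < L)
    (X : ℝ → Ω → ℝ)
    (hX : Measurable (Function.uncurry X))
    (hstat : ∀ (n : ℕ) (t : Fin n → ℝ) (s : ℝ), 0 ≤ s → (∀ i, 0 ≤ t i) →
      P.map (fun ω i => X (t i + s) ω) = P.map (fun ω i => X (t i) ω))
    (μ : ℝ → ℝ) (hμ_meas : Measurable μ)
    (hμ_nonneg : ∀ x, 0 ≤ μ x) (Cμ : ℝ) (hμ_bdd : ∀ x, μ x ≤ Cμ)
    (hμ_density : P.map (X 0) = volume.withDensity (fun x => ENNReal.ofReal (μ x)))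
    (hμ_holder : memHolder1 β L μ)
    (C₀ : ℝ)
    (hvar : ∀ T > (0 : ℝ), ∀ f : ℝ → ℝ, ∀ Mf : ℝ,
      Measurable f → (∀ x, |f x| ≤ Mf) → volume (Function.support f) < 1 →
      (∫ ω, ((∫ t in Set.Icc 0 T, f (X t ω))
          - ∫ ω', (∫ t in Set.Icc 0 T, f (X t ω')) ∂P) ^ 2 ∂P)
        ≤ C₀ * T * Mf ^ 2 * (volume (Function.support f)).toReal ^ 2 *
          (1 + Real.log (1 / (volume (Function.support f)).toReal) ^ (2 - (1 + α) / 2)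
             + Real.log (1 / (volume (Function.support f)).toReal)))
    (K : ℝ → ℝ) (hK_meas : Measurable K) (hK_int : ∫ x, K x = 1)
    (MK : ℝ) (hK_bdd : ∀ x, |K x| ≤ MK)
    (hK_supp : Function.support K ⊆ Set.Icc (-1) 1)
    (M : ℕ) (hM : β ≤ (M : ℝ))
    (hK_mom : ∀ l : ℕ, 1 ≤ l → l ≤ M → ∫ x, K x * x ^ l = 0) :
    ∃ C : ℝ,
      (∀ (x : ℝ) (T h : ℝ), 0 < T → h ∈ Set.Ioc (0 : ℝ) (1 / 2) →
        (∫ ω, ((1 / (T * h)) * (∫ u in Set.Icc 0 T, K ((x - X u ω) / h)) - μ x) ^ 2 ∂P)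
          ≤ C * (h ^ (2 * β)
            + T⁻¹ * (1 + Real.log (1 / h) ^ (2 - (1 + α) / 2) + Real.log (1 / h)))) ∧
      (∀ a ∈ Set.Ioc (0 : ℝ) 1, 2 * a * β > 1 →
        ∃ T₀ : ℝ, ∀ T ≥ T₀, ∀ x : ℝ,
          (∫ ω, ((1 / (T * T ^ (-a))) *
              (∫ u in Set.Icc 0 T, K ((x - X u ω) / T ^ (-a))) - μ x) ^ 2 ∂P)
            ≤ C * Real.log T ^ (max (2 - (1 + α) / 2) 1) / T) := by
  obtain ⟨hα0, hα2⟩ := hα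
  have hγ0 : 0 < 2 - (1+α)/2 := by linarith
  have hγ2 : 2 - (1+α)/2 ≤ 2 := by linarith
  -- flr facts
  have hceil1 : 1 ≤ ⌈β⌉₊ := Nat.one_le_ceil_iff.mpr hβ
  have hflr1 : (flr β) + 1 = ⌈β⌉₊ := by unfold flr; omega
  have hflr_le : β ≤ (flr β : ℝ) + 1 := by
    have h1 : β ≤ (⌈β⌉₊ : ℝ) := Nat.le_ceil β
    have h2 : ((flr β : ℕ) : ℝ) + 1 = (⌈β⌉₊ : ℝ) := by
      rw [← hflr1]; push_cast; ring
    linarith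
  have hflr_lt : ((flr β : ℕ) : ℝ) < β := by
    by_contra hc
    push_neg at hc
    have : ⌈β⌉₊ ≤ flr β := Nat.ceil_le.mpr hc
    omega
  have hflrM : flr β ≤ M := by
    have : ((flr β : ℕ) : ℝ) < (M : ℝ) := lt_of_lt_of_le hflr_lt hM
    exact (Nat.cast_lt.mp this).le
  have hmom' : ∀ l : ℕ, 1 ≤ l → l ≤ flr β → ∫ z, K z * z ^ l = 0 :=
    fun l h1 h2 => hK_mom l h1 (h2.trans hflrM)
  have htaylor := taylorHolder (flr β) β L μ hL.le hflr_lt hflr_le hμ_holder.2.1 hμ_holder.2.2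
  have hMK0 : 0 ≤ MK := (abs_nonneg _).trans (hK_bdd 0)
  have hCμ0 : 0 ≤ Cμ := (hμ_nonneg 0).trans (hμ_bdd 0)
  have hμ_abs : ∀ y, |μ y| ≤ Cμ := fun y => abs_le.mpr ⟨by linarith [hμ_nonneg y], hμ_bdd y⟩
  have hmarg : ∀ u : ℝ, 0 ≤ u → P.map (X u) = P.map (X 0) :=
    fun u hu => marginal_eq P X hX hstat u hu
  -- C₀ is nonnegative
  have hC₀ : 0 ≤ C₀ := by
    set g : ℝ → ℝ := Set.indicator (Set.Icc (0:ℝ) (1/2)) (fun _ => (1:ℝ)) with hg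
    have hgm : Measurable g := measurable_const.indicator measurableSet_Icc
    have hgbd : ∀ y, |g y| ≤ 1 := by
      intro y
      rw [hg]
      by_cases hy : y ∈ Set.Icc (0:ℝ) (1/2)
      · rw [Set.indicator_of_mem hy]; norm_num
      · rw [Set.indicator_of_notMem hy]; norm_num
    have hgsupp : Function.support g = Set.Icc (0:ℝ) (1/2) := by
      rw [hg, Set.support_indicator]
      have : Function.support (fun _ : ℝ => (1:ℝ)) = Set.univ :=
        Function.support_const one_ne_zero
      rw [this, Set.inter_univ]
    have hlt : volume (Function.support g) < 1 := by
      rw [hgsupp, Real.volume_Icc, show ((1:ℝ≥0∞)) = ENNReal.ofReal 1 by simp]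
      exact (ENNReal.ofReal_lt_ofReal_iff_of_nonneg (by norm_num)).mpr (by norm_num)
    have h1 := hvar 1 one_pos g 1 hgm hgbd hlt
    have h0 : (0:ℝ) ≤ ∫ ω, ((∫ t in Set.Icc (0:ℝ) 1, g (X t ω))
        - ∫ ω', (∫ t in Set.Icc (0:ℝ) 1, g (X t ω')) ∂P)^2 ∂P :=
      integral_nonneg fun ω => sq_nonneg _
    rw [hgsupp, Real.volume_Icc] at h1
    have htr : (ENNReal.ofReal ((1:ℝ)/2 - 0)).toReal = 1/2 := by
      rw [ENNReal.toReal_ofReal (by norm_num)]; norm_num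
    rw [htr] at h1
    have h2 := le_trans h0 h1
    have hlog2 : 0 < Real.log (1/((1:ℝ)/2)) := by
      rw [show (1:ℝ)/((1:ℝ)/2) = 2 by norm_num]
      exact Real.log_pos (by norm_num)
    have hpow : 0 ≤ Real.log (1/((1:ℝ)/2)) ^ (2-(1+α)/2) := Real.rpow_nonneg hlog2.le _
    nlinarith [h2, hlog2, hpow]
  -- constants
  set Cb := 2 * (MK * (L / ((flr β).factorial : ℝ))) with hCb
  have hCb0 : 0 ≤ Cb := by positivity
  set C₁ := max (Cb^2) (40*(C₀*MK^2)) + 1 with hC₁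
  have hC₁1 : 1 ≤ C₁ := by
    have := le_max_left (Cb^2) (40*(C₀*MK^2))
    have := sq_nonneg Cb
    rw [hC₁]; linarith
  have hC₁0 : 0 < C₁ := by linarith
  -- the key single-(x,T,h) bound
  have key : ∀ (x T h : ℝ), 0 < T → 0 < h → h ≤ 1/2 →
      (∫ ω, ((1 / (T * h)) * (∫ u in Set.Icc 0 T, K ((x - X u ω) / h)) - μ x) ^ 2 ∂P)
        ≤ C₁ * (h ^ (2*β)
            + T⁻¹ * (1 + Real.log (1/h) ^ (2 - (1+α)/2) + Real.log (1/h))) := by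
    intro x T h hT hh0 hh2
    have hlh0 : 0 ≤ Real.log (1/h) := Real.log_nonneg (by rw [le_div_iff₀ hh0]; linarith)
    have hbr0 : 0 ≤ 1 + Real.log (1/h) ^ (2-(1+α)/2) + Real.log (1/h) := by
      have := Real.rpow_nonneg hlh0 (2-(1+α)/2); linarith
    set f : ℝ → ℝ := fun y => K ((x - y)/h) with hfdef
    have hfmeas : Measurable f := hK_meas.comp (by fun_prop)
    have hfbd : ∀ y, |f y| ≤ MK := fun y => hK_bdd _
    have hfsupp : Function.support f ⊆ Set.Icc (x-h) (x+h) := by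
      intro y hy
      have h1 : f y ≠ 0 := hy
      have h2 : (x - y)/h ∈ Set.Icc (-1:ℝ) 1 := hK_supp h1
      obtain ⟨h3, h4⟩ := h2
      rw [div_le_one hh0] at h4
      rw [le_div_iff₀ hh0] at h3
      constructor <;> [linarith; linarith]
    set Y : Ω → ℝ := fun ω => ∫ u in Set.Icc 0 T, f (X u ω) with hYdef
    show (∫ ω, ((1 / (T * h)) * Y ω - μ x) ^ 2 ∂P) ≤ _
    have hY_sm : StronglyMeasurable Y := timeint_sm X hX f hfmeas T
    have hY_bd : ∀ ω, |Y ω| ≤ MK * T := timeint_bd X hX f hfmeas MK hfbd T hT.le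
    have hY_int : Integrable Y P := int_bddP P hY_sm.aestronglyMeasurable hY_bd
    set A := ∫ ω, Y ω ∂P with hA
    -- value of A
    have hA_eq : A = T * ∫ y, f y * μ y := by
      rw [hA]
      exact exp_timeint P X hX μ hμ_meas hμ_nonneg hμ_density hmarg f hfmeas MK hfbd T hT
    -- decomposition
    have hdecomp : (∫ ω, ((1/(T*h)) * Y ω - μ x)^2 ∂P)
        = (1/(T*h))^2 * (∫ ω, (Y ω - A)^2 ∂P) + ((1/(T*h))*A - μ x)^2 := by
      set c0 := 1/(T*h) with hc0
      set D := c0*A - μ x with hD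
      have hint1 : Integrable (fun ω => c0^2 * (Y ω - A)^2) P :=
        (sq_int P hY_sm A hY_bd).const_mul _
      have hint2 : Integrable (fun ω => (2*D*c0)*(Y ω - A)) P :=
        ((hY_int.sub (integrable_const A)).const_mul _)
      have hint3 : Integrable (fun ω => (2*D*c0)*(Y ω - A) + D^2) P :=
        hint2.add (integrable_const _)
      have hsub : ∫ ω, (Y ω - A) ∂P = 0 := by
        rw [integral_sub hY_int (integrable_const A), integral_const]
        simp [hA]
      calc ∫ ω, (c0 * Y ω - μ x)^2 ∂P
          = ∫ ω, (c0^2*(Y ω - A)^2 + ((2*D*c0)*(Y ω - A) + D^2)) ∂P := by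
            congr 1; ext ω; rw [hD]; ring
      _ = (∫ ω, c0^2*(Y ω - A)^2 ∂P) + ∫ ω, ((2*D*c0)*(Y ω - A) + D^2) ∂P :=
            integral_add hint1 hint3
      _ = (∫ ω, c0^2*(Y ω - A)^2 ∂P) + ((∫ ω, (2*D*c0)*(Y ω - A) ∂P) + ∫ _ω : Ω, (D^2:ℝ) ∂P) := by
            rw [integral_add hint2 (integrable_const _)]
      _ = c0^2 * (∫ ω, (Y ω - A)^2 ∂P) + ((2*D*c0) * (∫ ω, (Y ω - A) ∂P) + D^2) := by
            rw [integral_const_mul, integral_const_mul, integral_const]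
            simp
      _ = c0^2 * (∫ ω, (Y ω - A)^2 ∂P) + D^2 := by rw [hsub]; ring
    rw [show (∫ ω, ((1 / (T * h)) * Y ω - μ x) ^ 2 ∂P)
      = (1/(T*h))^2 * (∫ ω, (Y ω - A)^2 ∂P) + ((1/(T*h))*A - μ x)^2 from hdecomp]
    -- variance part
    have hV := variance_bound P α X hX C₀ hC₀ hvar hγ0 hγ2 f hfmeas MK hfbd x h T hT hh0 hh2 hfsupp
    have hVY : (∫ ω, (Y ω - A)^2 ∂P)
        ≤ 40*(C₀*MK^2) * T * (h^2*(1 + Real.log (1/h) ^ (2-(1+α)/2) + Real.log (1/h))) := hV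
    have hc2pos : (0:ℝ) ≤ (1/(T*h))^2 := sq_nonneg _
    have hvarfinal : (1/(T*h))^2 * (∫ ω, (Y ω - A)^2 ∂P)
        ≤ 40*(C₀*MK^2) * (T⁻¹ * (1 + Real.log (1/h) ^ (2-(1+α)/2) + Real.log (1/h))) := by
      calc (1/(T*h))^2 * (∫ ω, (Y ω - A)^2 ∂P)
          ≤ (1/(T*h))^2 * (40*(C₀*MK^2) * T *
              (h^2*(1 + Real.log (1/h) ^ (2-(1+α)/2) + Real.log (1/h)))) :=
            mul_le_mul_of_nonneg_left hVY hc2pos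
      _ = 40*(C₀*MK^2) * (T⁻¹ * (1 + Real.log (1/h) ^ (2-(1+α)/2) + Real.log (1/h))) := by
          field_simp
    -- bias part
    have hbias := bias_bound K μ hK_meas hK_int MK hK_bdd hK_supp hμ_meas Cμ hμ_abs
      (flr β) β L hL.le hβ htaylor hmom' x h hh0
    have hbias1 : |(1/(T*h))*A - μ x| ≤ Cb * h ^ β := by
      have he : (1/(T*h))*A = h⁻¹ * ∫ y, K ((x - y)/h) * μ y := by
        rw [hA_eq]
        have : (∫ y, f y * μ y) = ∫ y, K ((x - y)/h) * μ y := rfl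
        rw [this]
        field_simp
      rw [he]
      calc |h⁻¹ * (∫ y, K ((x - y)/h) * μ y) - μ x|
          ≤ 2 * (MK * (L / ((flr β).factorial : ℝ)) * h ^ β) := hbias
      _ = Cb * h ^ β := by rw [hCb]; ring
    have hbias2 : ((1/(T*h))*A - μ x)^2 ≤ Cb^2 * h ^ (2*β) := by
      have h1 : ((1/(T*h))*A - μ x)^2 = |(1/(T*h))*A - μ x|^2 := (sq_abs _).symm
      have h2 : |(1/(T*h))*A - μ x|^2 ≤ (Cb * h ^ β)^2 :=
        pow_le_pow_left₀ (abs_nonneg _) hbias1 2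
      have h3 : (Cb * h ^ β)^2 = Cb^2 * (h ^ β)^2 := by ring
      have h4 : (h ^ β)^2 = h ^ (2*β) := by
        rw [← Real.rpow_natCast (h ^ β) 2, ← Real.rpow_mul hh0.le]
        norm_num
        rw [mul_comm]
      rw [h1]
      rw [h3, h4] at h2
      exact h2
    -- combine
    have hhb0 : (0:ℝ) ≤ h ^ (2*β) := Real.rpow_nonneg hh0.le _
    have hT0 : (0:ℝ) ≤ T⁻¹ := inv_nonneg.mpr hT.le
    have hm1 : Cb^2 ≤ C₁ := by
      rw [hC₁]; have := le_max_left (Cb^2) (40*(C₀*MK^2)); linarith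
    have hm2 : 40*(C₀*MK^2) ≤ C₁ := by
      rw [hC₁]; have := le_max_right (Cb^2) (40*(C₀*MK^2)); linarith
    have e1 : Cb^2 * h^(2*β) ≤ C₁ * h^(2*β) := mul_le_mul_of_nonneg_right hm1 hhb0
    have e2 : 40*(C₀*MK^2) * (T⁻¹ * (1 + Real.log (1/h) ^ (2-(1+α)/2) + Real.log (1/h)))
        ≤ C₁ * (T⁻¹ * (1 + Real.log (1/h) ^ (2-(1+α)/2) + Real.log (1/h))) :=
      mul_le_mul_of_nonneg_right hm2 (mul_nonneg hT0 hbr0)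
    calc (1/(T*h))^2 * (∫ ω, (Y ω - A)^2 ∂P) + ((1/(T*h))*A - μ x)^2
        ≤ 40*(C₀*MK^2) * (T⁻¹ * (1 + Real.log (1/h) ^ (2-(1+α)/2) + Real.log (1/h)))
          + Cb^2 * h ^ (2*β) := add_le_add hvarfinal hbias2
    _ ≤ C₁ * (T⁻¹ * (1 + Real.log (1/h) ^ (2-(1+α)/2) + Real.log (1/h))) + C₁ * h^(2*β) :=
          add_le_add e2 e1
    _ = C₁ * (h ^ (2*β) + T⁻¹ * (1 + Real.log (1/h) ^ (2-(1+α)/2) + Real.log (1/h))) := by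
          ring
  -- final constant
  refine ⟨16*C₁, ?_, ?_⟩
  · intro x T h hT hh
    have hbr0 : 0 ≤ 1 + Real.log (1/h) ^ (2-(1+α)/2) + Real.log (1/h) := by
      have hlh0 : 0 ≤ Real.log (1/h) := Real.log_nonneg (by rw [le_div_iff₀ hh.1]; linarith [hh.2])
      have := Real.rpow_nonneg hlh0 (2-(1+α)/2); linarith
    have hsum0 : 0 ≤ h ^ (2*β) + T⁻¹ * (1 + Real.log (1/h) ^ (2-(1+α)/2) + Real.log (1/h)) := by
      have h1 : (0:ℝ) ≤ h ^ (2*β) := Real.rpow_nonneg hh.1.le _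
      have h2 : (0:ℝ) ≤ T⁻¹ := inv_nonneg.mpr hT.le
      nlinarith
    calc (∫ ω, ((1 / (T * h)) * (∫ u in Set.Icc 0 T, K ((x - X u ω) / h)) - μ x) ^ 2 ∂P)
        ≤ C₁ * (h ^ (2*β) + T⁻¹ * (1 + Real.log (1/h) ^ (2-(1+α)/2) + Real.log (1/h))) :=
          key x T h hT hh.1 hh.2
    _ ≤ 16*C₁ * (h ^ (2*β) + T⁻¹ * (1 + Real.log (1/h) ^ (2-(1+α)/2) + Real.log (1/h))) :=
          mul_le_mul_of_nonneg_right (by linarith) hsum0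
  · intro a ha h2ab
    refine ⟨max (Real.exp 1) ((2:ℝ) ^ (1/a)), ?_⟩
    intro T hTlarge x
    have ha0 : 0 < a := ha.1
    have ha1 : a ≤ 1 := ha.2
    have hTe : Real.exp 1 ≤ T := le_trans (le_max_left _ _) hTlarge
    have hT1 : (1:ℝ) ≤ T := le_trans (by
      have := Real.add_one_le_exp (1:ℝ); linarith) hTe
    have hT : (0:ℝ) < T := by linarith
    have hlogT1 : (1:ℝ) ≤ Real.log T := by
      rw [Real.le_log_iff_exp_le hT]; exact hTe
    have hlogT0 : (0:ℝ) < Real.log T := by linarith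
    -- h = T^(-a)
    have hh0 : (0:ℝ) < T ^ (-a) := Real.rpow_pos_of_pos hT _
    have hTa2 : (2:ℝ) ≤ T ^ a := by
      have h1 : ((2:ℝ) ^ (1/a)) ≤ T := le_trans (le_max_right _ _) hTlarge
      have h2 : ((2:ℝ) ^ (1/a)) ^ a ≤ T ^ a :=
        Real.rpow_le_rpow (Real.rpow_nonneg (by norm_num) _) h1 ha0.le
      rwa [← Real.rpow_mul (by norm_num), one_div, inv_mul_cancel₀ (ne_of_gt ha0),
        Real.rpow_one] at h2
    have hh2 : T ^ (-a) ≤ 1/2 := by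
      rw [Real.rpow_neg hT.le]
      have hTa0 : (0:ℝ) < T ^ a := Real.rpow_pos_of_pos hT _
      rw [inv_le_comm₀ hTa0 (by norm_num)]
      calc (1/2:ℝ)⁻¹ = 2 := by norm_num
      _ ≤ T ^ a := hTa2
    have hkey := key x T (T ^ (-a)) hT hh0 hh2
    -- arithmetic on the rhs
    set m := max (2 - (1+α)/2) 1 with hm
    have hm1 : (1:ℝ) ≤ m := le_max_right _ _
    have hlogh : Real.log (1/(T ^ (-a))) = a * Real.log T := by
      rw [one_div, ← Real.rpow_neg hT.le, Real.log_rpow hT]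
      ring
    have hlm0 : (0:ℝ) ≤ Real.log T ^ m := Real.rpow_nonneg hlogT0.le _
    have hlm1 : (1:ℝ) ≤ Real.log T ^ m := by
      calc (1:ℝ) = 1 ^ m := (Real.one_rpow m).symm
      _ ≤ Real.log T ^ m := Real.rpow_le_rpow (by norm_num) hlogT1 (by linarith)
    have hbound1 : (a * Real.log T) ^ (2 - (1+α)/2) ≤ Real.log T ^ m := by
      have h1 : a * Real.log T ≤ Real.log T := by nlinarith
      have h2 : (a * Real.log T) ^ (2 - (1+α)/2) ≤ Real.log T ^ (2 - (1+α)/2) :=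
        Real.rpow_le_rpow (by positivity) h1 hγ0.le
      have h3 : Real.log T ^ (2 - (1+α)/2) ≤ Real.log T ^ m :=
        Real.rpow_le_rpow_of_exponent_le hlogT1 (le_max_left _ _)
      linarith
    have hbound2 : a * Real.log T ≤ Real.log T ^ m := by
      have h1 : a * Real.log T ≤ Real.log T := by nlinarith
      have h2 : Real.log T = Real.log T ^ (1:ℝ) := (Real.rpow_one _).symm
      have h3 : Real.log T ^ (1:ℝ) ≤ Real.log T ^ m :=
        Real.rpow_le_rpow_of_exponent_le hlogT1 hm1
      calc a * Real.log T ≤ Real.log T := h1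
      _ = Real.log T ^ (1:ℝ) := h2
      _ ≤ Real.log T ^ m := h3
    have hbrbound : 1 + Real.log (1/(T ^ (-a))) ^ (2-(1+α)/2) + Real.log (1/(T ^ (-a)))
        ≤ 3 * Real.log T ^ m := by
      rw [hlogh]
      linarith [hbound1, hbound2, hlm1]
    have hhb : (T ^ (-a)) ^ (2*β) ≤ T⁻¹ := by
      have h1 : (T ^ (-a)) ^ (2*β) = T ^ ((-a) * (2*β)) := (Real.rpow_mul hT.le (-a) (2*β)).symm
      have h2 : T ^ ((-a) * (2*β)) ≤ T ^ (-1:ℝ) := by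
        apply Real.rpow_le_rpow_of_exponent_le hT1
        nlinarith
      rw [h1]
      calc T ^ ((-a) * (2*β)) ≤ T ^ (-1:ℝ) := h2
      _ = T⁻¹ := by rw [Real.rpow_neg_one]
    have hT0 : (0:ℝ) ≤ T⁻¹ := inv_nonneg.mpr hT.le
    have hfinal : (T ^ (-a)) ^ (2*β)
        + T⁻¹ * (1 + Real.log (1/(T ^ (-a))) ^ (2-(1+α)/2) + Real.log (1/(T ^ (-a))))
        ≤ 4 * (Real.log T ^ m * T⁻¹) := by
      have h1 : T⁻¹ * (1 + Real.log (1/(T ^ (-a))) ^ (2-(1+α)/2) + Real.log (1/(T ^ (-a))))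
          ≤ T⁻¹ * (3 * Real.log T ^ m) := mul_le_mul_of_nonneg_left hbrbound hT0
      have h2 : T⁻¹ ≤ T⁻¹ * Real.log T ^ m := by nlinarith
      nlinarith [hhb]
    calc (∫ ω, ((1 / (T * T ^ (-a))) *
            (∫ u in Set.Icc 0 T, K ((x - X u ω) / T ^ (-a))) - μ x) ^ 2 ∂P)
        ≤ C₁ * ((T ^ (-a)) ^ (2*β)
            + T⁻¹ * (1 + Real.log (1/(T ^ (-a))) ^ (2-(1+α)/2) + Real.log (1/(T ^ (-a))))) :=
          hkey
    _ ≤ C₁ * (4 * (Real.log T ^ m * T⁻¹)) := mul_le_mul_of_nonneg_left hfinal (by linarith)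
    _ ≤ 16*C₁ * Real.log T ^ m / T := by
        rw [div_eq_mul_inv]
        nlinarith [mul_nonneg hlm0 hT0, hC₁0.le]
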